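/- In the setting of the marginal function f(x) = max_{y∈Y} φ(x, y), define G(x, ε) = {∇ₓφ(x, y) : y ∈ Y^ε(x)} and S(x) = {∇ₓφ(x, y) : y ∈ Y*(x)}. Then: (c) for every fixed ε > 0, every x̄, and every single-valued selection y^ε(x) ∈ Y^ε(x), limsup_{x→x̄} ∇ₓφ(x, y^ε(x)) ⊆ {∇ₓφ(x̄, y) : y ∈ Y^ε(x̄)}; consequently limsup_{x→x̄} G(x, ε) = G(x̄, ε). (d) If S(x̄) is convex, then lim_{ε↓0} ∇ₓφ(x̄, y^ε(x̄)) is the minimal-norm element of ∂f(x̄), and if S(x) is convex for every x, then G is a descent-oriented subdifferential for f. -/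

import Mathlib

open Filter Topology Set
open scoped RealInnerProductSpace NNReal

noncomputable section

variable {E : Type*} [NormedAddCommGroup E] [InnerProductSpace ℝ E]

/-- The Clarke generalized directional derivative of `f` at `x` in direction `d`. -/
def clarkeDeriv (f : E → ℝ) (x d : E) : ℝ :=
  Filter.limsup (fun p : E × ℝ => (f (p.1 + p.2 • d) - f p.1) / p.2)
    ((𝓝 x) ×ˢ (𝓝[>] (0 : ℝ)))

/-- The Clarke subdifferential of `f` at `x`. -/
def clarkeSubdiff (f : E → ℝ) (x : E) : Set E :=
  {v | ∀ d : E, ⟪v, d⟫ ≤ clarkeDeriv f x d}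

/-- Outer limit of `G x ε` along joint sequences `ε_k ↓ 0` and `x_k → x̄`. -/
def SeqJointLimsup (G : E → ℝ → Set E) (xbar : E) : Set E :=
  {u | ∃ (eps : ℕ → ℝ) (xs : ℕ → E) (vs : ℕ → E),
    (∀ k, 0 < eps k) ∧ Tendsto eps atTop (𝓝 0) ∧ Tendsto xs atTop (𝓝 xbar) ∧
    (∀ k, vs k ∈ G (xs k) (eps k)) ∧ Tendsto vs atTop (𝓝 u)}

/-- Outer limit `limsup_{x → xbar} S x` of a set-valued map. -/
def SetMapLimsup (S : E → Set E) (xbar : E) : Set E :=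
  {u | ∃ (xs : ℕ → E) (vs : ℕ → E),
    Tendsto xs atTop (𝓝 xbar) ∧ (∀ k, vs k ∈ S (xs k)) ∧ Tendsto vs atTop (𝓝 u)}

/-- Outer limit of a family of sets `A ε` as `ε ↓ 0`. -/
def FamilyOuterLimit (A : ℝ → Set E) : Set E :=
  {u | ∃ (eps : ℕ → ℝ) (vs : ℕ → E), (∀ k, 0 < eps k) ∧ Tendsto eps atTop (𝓝 0) ∧
    (∀ k, vs k ∈ A (eps k)) ∧ Tendsto vs atTop (𝓝 u)}

/-- Inner limit of a family of sets `A ε` as `ε ↓ 0`. -/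
def FamilyInnerLimit (A : ℝ → Set E) : Set E :=
  {u | ∀ eps : ℕ → ℝ, (∀ k, 0 < eps k) → Tendsto eps atTop (𝓝 0) →
    ∃ vs : ℕ → E, (∀ᶠ k in atTop, vs k ∈ A (eps k)) ∧ Tendsto vs atTop (𝓝 u)}

/-- Painlevé–Kuratowski convergence of the family `A ε` to the set `B` as `ε ↓ 0`. -/
def PKTendsto (A : ℝ → Set E) (B : Set E) : Prop :=
  FamilyOuterLimit A ⊆ B ∧ B ⊆ FamilyInnerLimit A

/-- `g` is the minimal-norm element of `S`. -/
def IsMinNormElt (S : Set E) (g : E) : Prop :=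
  g ∈ S ∧ ∀ v ∈ S, ‖g‖ ≤ ‖v‖

/-- A descent-oriented subdifferential for `f`:  for each fixed `ε > 0` the map
`x ↦ G x ε` is closed-valued and locally bounded, (G1) the joint outer limit as
`ε ↓ 0`, `x → x̄` is contained in the Clarke subdifferential, and (G2) the sets
`limsup_{x → x̄} G x ε` converge in the Painlevé–Kuratowski sense, as `ε ↓ 0`,
to the singleton consisting of the minimal-norm Clarke subgradient. -/
structure IsDescentOrientedSubdiff (f : E → ℝ) (G : E → ℝ → Set E) : Prop where
  closedVals : ∀ ε : ℝ, 0 < ε → ∀ x : E, IsClosed (G x ε)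
  locBounded : ∀ ε : ℝ, 0 < ε → ∀ x : E,
    ∃ δ > (0 : ℝ), ∃ M : ℝ, ∀ y : E, ‖y - x‖ < δ → ∀ v ∈ G y ε, ‖v‖ ≤ M
  outerClarke : ∀ xbar : E, SeqJointLimsup G xbar ⊆ clarkeSubdiff f xbar
  minNormLimit : ∀ xbar : E, ∃ g : E, IsMinNormElt (clarkeSubdiff f xbar) g ∧
    PKTendsto (fun ε => SetMapLimsup (fun x => G x ε) xbar) {g}

variable {F : Type*} [NormedAddCommGroup F] [InnerProductSpace ℝ F]

/-- The marginal function `f(x) = max_{y ∈ Y} φ(x, y)`. -/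
def marginalMax (φ : E → F → ℝ) (Y : Set F) (x : E) : ℝ :=
  sSup ((φ x) '' Y)

/-- The solution set `Y*(x)` of the inner maximization. -/
def maxSol (φ : E → F → ℝ) (Y : Set F) (x : E) : Set F :=
  {y ∈ Y | ∀ y' ∈ Y, φ x y' ≤ φ x y}

/-- The solution set `Y^ε(x)` of the subgradient-regularized inner problem, where
`gx x y` denotes the partial gradient `∇ₓ φ (x, y)`. -/
def regMaxSol (φ : E → F → ℝ) (gx : E → F → E) (Y : Set F) (ε : ℝ) (x : E) : Set F :=
  {y ∈ Y | ∀ y' ∈ Y,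
    φ x y' - ε / 2 * ‖gx x y'‖ ^ 2 ≤ φ x y - ε / 2 * ‖gx x y‖ ^ 2}

section AuxLemmas

variable {n m : ℕ}
  {Y : Set (EuclideanSpace ℝ (Fin m))}
  {φ : EuclideanSpace ℝ (Fin n) → EuclideanSpace ℝ (Fin m) → ℝ}
  {gx : EuclideanSpace ℝ (Fin n) → EuclideanSpace ℝ (Fin m) → EuclideanSpace ℝ (Fin n)}

lemma aux_contY (hφcont : Continuous fun p : EuclideanSpace ℝ (Fin n) × EuclideanSpace ℝ (Fin m) => φ p.1 p.2)
    (x : EuclideanSpace ℝ (Fin n)) : Continuous (φ x) :=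
  hφcont.comp (Continuous.prodMk_right x)

lemma aux_maxSol_nonempty (hYne : Y.Nonempty) (hYcomp : IsCompact Y)
    (hφcont : Continuous fun p : EuclideanSpace ℝ (Fin n) × EuclideanSpace ℝ (Fin m) => φ p.1 p.2)
    (x : EuclideanSpace ℝ (Fin n)) : (maxSol φ Y x).Nonempty := by
  obtain ⟨y, hy, hmax⟩ := hYcomp.exists_isMaxOn hYne (aux_contY hφcont x).continuousOn
  exact ⟨y, hy, fun y' hy' => hmax hy'⟩

lemma aux_marginal_eq (hYcomp : IsCompact Y)
    (hφcont : Continuous fun p : EuclideanSpace ℝ (Fin n) × EuclideanSpace ℝ (Fin m) => φ p.1 p.2)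
    {x : EuclideanSpace ℝ (Fin n)} {y : EuclideanSpace ℝ (Fin m)}
    (hy : y ∈ maxSol φ Y x) : marginalMax φ Y x = φ x y := by
  apply le_antisymm
  · exact csSup_le ⟨φ x y, ⟨y, hy.1, rfl⟩⟩ (by rintro a ⟨y', hy', rfl⟩; exact hy.2 y' hy')
  · exact le_csSup ((hYcomp.image (aux_contY hφcont x)).bddAbove) ⟨y, hy.1, rfl⟩

lemma aux_le_marginal (hYcomp : IsCompact Y)
    (hφcont : Continuous fun p : EuclideanSpace ℝ (Fin n) × EuclideanSpace ℝ (Fin m) => φ p.1 p.2)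
    {x : EuclideanSpace ℝ (Fin n)} {y : EuclideanSpace ℝ (Fin m)}
    (hy : y ∈ Y) : φ x y ≤ marginalMax φ Y x :=
  le_csSup ((hYcomp.image (aux_contY hφcont x)).bddAbove) ⟨y, hy, rfl⟩

lemma aux_maxSol_isCompact (hYcomp : IsCompact Y)
    (hφcont : Continuous fun p : EuclideanSpace ℝ (Fin n) × EuclideanSpace ℝ (Fin m) => φ p.1 p.2)
    (x : EuclideanSpace ℝ (Fin n)) : IsCompact (maxSol φ Y x) := by
  have h : maxSol φ Y x = Y ∩ ⋂ y' ∈ Y, {y | φ x y' ≤ φ x y} := by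
    ext y; simp [maxSol, Set.mem_iInter]
  rw [h]
  exact hYcomp.inter_right (isClosed_biInter fun y' _ =>
    isClosed_le continuous_const (aux_contY hφcont x))

/-- Mean value theorem along a segment. -/
lemma aux_mvt
    (hgrad : ∀ x, ∀ y ∈ Y, HasGradientAt (fun x' => φ x' y) (gx x y) x)
    {y : EuclideanSpace ℝ (Fin m)} (hy : y ∈ Y)
    (a b : EuclideanSpace ℝ (Fin n)) :
    ∃ θ ∈ Set.Ioo (0:ℝ) 1, φ b y - φ a y = ⟪gx (a + θ • (b - a)) y, b - a⟫ := by
  set ψ : ℝ → ℝ := fun s => φ (a + s • (b - a)) y with hψ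
  have hline : ∀ s : ℝ, HasDerivAt (fun s : ℝ => a + s • (b - a)) (b - a) s := by
    intro s
    simpa using ((hasDerivAt_id s).smul_const (b - a)).const_add a
  have hd : ∀ s : ℝ, HasDerivAt ψ ⟪gx (a + s • (b - a)) y, b - a⟫ s := by
    intro s
    have h1 := (hgrad (a + s • (b - a)) y hy).hasFDerivAt
    have := h1.comp_hasDerivAt s (hline s)
    simp only [InnerProductSpace.toDual_apply_apply] at this
    exact this
  obtain ⟨θ, hθ, heq⟩ := exists_hasDerivAt_eq_slope ψ
    (fun s => ⟪gx (a + s • (b - a)) y, b - a⟫) (by norm_num : (0:ℝ) < 1)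
    (fun s _ => (hd s).continuousAt.continuousWithinAt) (fun s _ => hd s)
  refine ⟨θ, hθ, ?_⟩
  rw [heq]
  simp [ψ]

lemma aux_gx_bound (hYcomp : IsCompact Y)
    (hgxcont : Continuous fun p : EuclideanSpace ℝ (Fin n) × EuclideanSpace ℝ (Fin m) => gx p.1 p.2)
    {K : Set (EuclideanSpace ℝ (Fin n))} (hK : IsCompact K) :
    ∃ L : ℝ, 0 ≤ L ∧ ∀ x ∈ K, ∀ y ∈ Y, ‖gx x y‖ ≤ L := by
  obtain ⟨C, hC⟩ := (hK.prod hYcomp).exists_bound_of_continuousOn hgxcont.continuousOn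
  exact ⟨max C 0, le_max_right _ _, fun x hx y hy =>
    le_trans (hC (x, y) ⟨hx, hy⟩) (le_max_left _ _)⟩

/-- intermediate point of the segment stays in the ball -/
lemma aux_seg_mem {a b xbar : EuclideanSpace ℝ (Fin n)} {r θ : ℝ}
    (hθ : θ ∈ Set.Ioo (0:ℝ) 1) (ha : ‖a - xbar‖ < r) (hb : ‖b - xbar‖ < r) :
    ‖(a + θ • (b - a)) - xbar‖ < r := by
  have key : (a + θ • (b - a)) - xbar = (1 - θ) • (a - xbar) + θ • (b - xbar) := by
    module
  rw [key]
  calc ‖(1 - θ) • (a - xbar) + θ • (b - xbar)‖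
      ≤ ‖(1 - θ) • (a - xbar)‖ + ‖θ • (b - xbar)‖ := norm_add_le _ _
    _ = (1 - θ) * ‖a - xbar‖ + θ * ‖b - xbar‖ := by
        rw [norm_smul, norm_smul, Real.norm_eq_abs, Real.norm_eq_abs,
          abs_of_pos hθ.1, abs_of_pos (by linarith [hθ.2] : (0:ℝ) < 1 - θ)]
    _ < (1 - θ) * r + θ * r := by
        apply add_lt_add
        · exact mul_lt_mul_of_pos_left ha (by linarith [hθ.2])
        · exact mul_lt_mul_of_pos_left hb hθ.1
    _ = r := by ring

/-- one-sided Lipschitz estimate -/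
lemma aux_lip (hYne : Y.Nonempty) (hYcomp : IsCompact Y)
    (hφcont : Continuous fun p : EuclideanSpace ℝ (Fin n) × EuclideanSpace ℝ (Fin m) => φ p.1 p.2)
    (hgrad : ∀ x, ∀ y ∈ Y, HasGradientAt (fun x' => φ x' y) (gx x y) x)
    {a b xbar : EuclideanSpace ℝ (Fin n)} {L r : ℝ}
    (hL : ∀ x ∈ Metric.closedBall xbar r, ∀ y ∈ Y, ‖gx x y‖ ≤ L)
    (ha : ‖a - xbar‖ < r) (hb : ‖b - xbar‖ < r) :
    marginalMax φ Y b - marginalMax φ Y a ≤ L * ‖b - a‖ := by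
  obtain ⟨yb, hyb⟩ := aux_maxSol_nonempty hYne hYcomp hφcont b
  have h1 : marginalMax φ Y b = φ b yb := aux_marginal_eq hYcomp hφcont hyb
  have h2 : φ a yb ≤ marginalMax φ Y a := aux_le_marginal hYcomp hφcont hyb.1
  obtain ⟨θ, hθ, hmvt⟩ := aux_mvt hgrad hyb.1 a b
  have hmem : ‖(a + θ • (b - a)) - xbar‖ < r := aux_seg_mem hθ ha hb
  have hbound : ⟪gx (a + θ • (b - a)) yb, b - a⟫ ≤ L * ‖b - a‖ := by
    calc ⟪gx (a + θ • (b - a)) yb, b - a⟫ ≤ ‖gx (a + θ • (b - a)) yb‖ * ‖b - a‖ :=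
          real_inner_le_norm _ _
      _ ≤ L * ‖b - a‖ := by
          apply mul_le_mul_of_nonneg_right _ (norm_nonneg _)
          exact hL _ (by simpa [Metric.mem_closedBall, dist_eq_norm] using hmem.le) yb hyb.1
  linarith [hmvt]

lemma aux_tendsto_phi
    (hφcont : Continuous fun p : EuclideanSpace ℝ (Fin n) × EuclideanSpace ℝ (Fin m) => φ p.1 p.2)
    {α : Type*} {l : Filter α} {xs : α → EuclideanSpace ℝ (Fin n)} {ys : α → EuclideanSpace ℝ (Fin m)}
    {x0 : EuclideanSpace ℝ (Fin n)} {y0 : EuclideanSpace ℝ (Fin m)}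
    (hx : Tendsto xs l (𝓝 x0)) (hy : Tendsto ys l (𝓝 y0)) :
    Tendsto (fun k => φ (xs k) (ys k)) l (𝓝 (φ x0 y0)) :=
  (hφcont.tendsto (x0, y0)).comp (hx.prodMk_nhds hy)

lemma aux_tendsto_gx
    (hgxcont : Continuous fun p : EuclideanSpace ℝ (Fin n) × EuclideanSpace ℝ (Fin m) => gx p.1 p.2)
    {α : Type*} {l : Filter α} {xs : α → EuclideanSpace ℝ (Fin n)} {ys : α → EuclideanSpace ℝ (Fin m)}
    {x0 : EuclideanSpace ℝ (Fin n)} {y0 : EuclideanSpace ℝ (Fin m)}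
    (hx : Tendsto xs l (𝓝 x0)) (hy : Tendsto ys l (𝓝 y0)) :
    Tendsto (fun k => gx (xs k) (ys k)) l (𝓝 (gx x0 y0)) :=
  (hgxcont.tendsto (x0, y0)).comp (hx.prodMk_nhds hy)

lemma aux_tendsto_of_norm_lt {xs : ℕ → EuclideanSpace ℝ (Fin n)}
    {xbar : EuclideanSpace ℝ (Fin n)} (h : ∀ k : ℕ, ‖xs k - xbar‖ < 1 / (k + 1)) :
    Tendsto xs atTop (𝓝 xbar) := by
  rw [tendsto_iff_norm_sub_tendsto_zero]
  exact squeeze_zero (fun k => norm_nonneg _) (fun k => (h k).le)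
    tendsto_one_div_add_atTop_nhds_zero_nat

lemma aux_Msup_le (hYcomp : IsCompact Y)
    (hφcont : Continuous fun p : EuclideanSpace ℝ (Fin n) × EuclideanSpace ℝ (Fin m) => φ p.1 p.2)
    (hgxcont : Continuous fun p : EuclideanSpace ℝ (Fin n) × EuclideanSpace ℝ (Fin m) => gx p.1 p.2)
    {xbar : EuclideanSpace ℝ (Fin n)} (d : EuclideanSpace ℝ (Fin n))
    {y : EuclideanSpace ℝ (Fin m)} (hy : y ∈ maxSol φ Y xbar) :
    ⟪gx xbar y, d⟫ ≤ sSup ((fun y => ⟪gx xbar y, d⟫) '' maxSol φ Y xbar) := by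
  have hc : Continuous fun y : EuclideanSpace ℝ (Fin m) => ⟪gx xbar y, d⟫ :=
    (hgxcont.comp (Continuous.prodMk_right xbar)).inner continuous_const
  have hbdd : BddAbove ((fun y => ⟪gx xbar y, d⟫) '' maxSol φ Y xbar) :=
    ((aux_maxSol_isCompact hYcomp hφcont xbar).image hc).bddAbove
  exact le_csSup hbdd ⟨y, hy, rfl⟩

lemma aux_Msup_attained (hYne : Y.Nonempty) (hYcomp : IsCompact Y)
    (hφcont : Continuous fun p : EuclideanSpace ℝ (Fin n) × EuclideanSpace ℝ (Fin m) => φ p.1 p.2)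
    (hgxcont : Continuous fun p : EuclideanSpace ℝ (Fin n) × EuclideanSpace ℝ (Fin m) => gx p.1 p.2)
    (xbar d : EuclideanSpace ℝ (Fin n)) :
    ∃ y ∈ maxSol φ Y xbar,
      sSup ((fun y => ⟪gx xbar y, d⟫) '' maxSol φ Y xbar) = ⟪gx xbar y, d⟫ := by
  have hc : Continuous fun y : EuclideanSpace ℝ (Fin m) => ⟪gx xbar y, d⟫ :=
    (hgxcont.comp (Continuous.prodMk_right xbar)).inner continuous_const
  obtain ⟨y, hy, hmax⟩ := (aux_maxSol_isCompact hYcomp hφcont xbar).exists_isMaxOn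
    (aux_maxSol_nonempty hYne hYcomp hφcont xbar) hc.continuousOn
  have hbdd : BddAbove ((fun y => ⟪gx xbar y, d⟫) '' maxSol φ Y xbar) :=
    ((aux_maxSol_isCompact hYcomp hφcont xbar).image hc).bddAbove
  refine ⟨y, hy, le_antisymm (csSup_le ⟨_, ⟨y, hy, rfl⟩⟩ ?_)
    (le_csSup hbdd ⟨y, hy, rfl⟩)⟩
  rintro a ⟨y', hy', rfl⟩; exact hmax hy'

/-- upper semicontinuity bound for the Danskin argument -/
lemma aux_usc (hYne : Y.Nonempty) (hYcomp : IsCompact Y)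
    (hφcont : Continuous fun p : EuclideanSpace ℝ (Fin n) × EuclideanSpace ℝ (Fin m) => φ p.1 p.2)
    (hgxcont : Continuous fun p : EuclideanSpace ℝ (Fin n) × EuclideanSpace ℝ (Fin m) => gx p.1 p.2)
    (xbar d : EuclideanSpace ℝ (Fin n)) {δ : ℝ} (hδ : 0 < δ) :
    ∃ r > (0:ℝ), ∀ ξ x'' : EuclideanSpace ℝ (Fin n), ‖ξ - xbar‖ < r → ‖x'' - xbar‖ < r →
      ∀ y ∈ maxSol φ Y x'',
        ⟪gx ξ y, d⟫ ≤ sSup ((fun y => ⟪gx xbar y, d⟫) '' maxSol φ Y xbar) + δ := by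
  set Msup := sSup ((fun y => ⟪gx xbar y, d⟫) '' maxSol φ Y xbar) with hM
  by_contra hcon
  push_neg at hcon
  have H : ∀ k : ℕ, ∃ ξ x'' y, ‖ξ - xbar‖ < 1 / (k + 1) ∧ ‖x'' - xbar‖ < 1 / (k + 1) ∧
      y ∈ maxSol φ Y x'' ∧ Msup + δ < ⟪gx ξ y, d⟫ := by
    intro k
    obtain ⟨ξ, x'', h1, h2, y, hy, h4⟩ := hcon (1 / (k + 1)) (by positivity)
    exact ⟨ξ, x'', y, h1, h2, hy, h4⟩
  choose ξ xs ys h1 h2 h3 h4 using H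
  obtain ⟨yhat, hyhatY, σ, hσ, hyconv⟩ := hYcomp.isSeqCompact (fun k => (h3 k).1)
  have hξ : Tendsto (ξ ∘ σ) atTop (𝓝 xbar) :=
    (aux_tendsto_of_norm_lt h1).comp hσ.tendsto_atTop
  have hxs : Tendsto (xs ∘ σ) atTop (𝓝 xbar) :=
    (aux_tendsto_of_norm_lt h2).comp hσ.tendsto_atTop
  have hyhat : yhat ∈ maxSol φ Y xbar := by
    refine ⟨hyhatY, fun y' hy' => ?_⟩
    refine le_of_tendsto_of_tendsto' (aux_tendsto_phi hφcont hxs tendsto_const_nhds)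
      (aux_tendsto_phi hφcont hxs hyconv) (fun j => ?_)
    exact (h3 (σ j)).2 y' hy'
  have hlim : Tendsto (fun j => ⟪gx (ξ (σ j)) (ys (σ j)), d⟫) atTop (𝓝 ⟪gx xbar yhat, d⟫) :=
    ((aux_tendsto_gx hgxcont hξ hyconv).inner tendsto_const_nhds)
  have hge : Msup + δ ≤ ⟪gx xbar yhat, d⟫ :=
    ge_of_tendsto' hlim (fun j => (h4 (σ j)).le)
  have hle : ⟪gx xbar yhat, d⟫ ≤ Msup := aux_Msup_le hYcomp hφcont hgxcont d hyhat
  linarith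

lemma aux_eventually_ball {xbar : EuclideanSpace ℝ (Fin n)} {ρ τ : ℝ} (hρ : 0 < ρ) (hτ : 0 < τ) :
    ∀ᶠ p : EuclideanSpace ℝ (Fin n) × ℝ in (𝓝 xbar ×ˢ 𝓝[>] (0:ℝ)),
      ‖p.1 - xbar‖ < ρ ∧ 0 < p.2 ∧ p.2 < τ := by
  have hA : ∀ᶠ x' in 𝓝 xbar, ‖x' - xbar‖ < ρ := by
    filter_upwards [Metric.ball_mem_nhds xbar hρ] with x hx
    simpa [dist_eq_norm] using hx
  have hB : ∀ᶠ t in 𝓝[>] (0:ℝ), 0 < t ∧ t < τ := by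
    filter_upwards [Ioo_mem_nhdsGT hτ] with t ht
    exact ⟨ht.1, ht.2⟩
  exact hA.prod_mk hB

/-- the difference quotient is eventually bounded in absolute value by `L * ‖d‖` -/
lemma aux_quot_bound (hYne : Y.Nonempty) (hYcomp : IsCompact Y)
    (hφcont : Continuous fun p : EuclideanSpace ℝ (Fin n) × EuclideanSpace ℝ (Fin m) => φ p.1 p.2)
    (hgrad : ∀ x, ∀ y ∈ Y, HasGradientAt (fun x' => φ x' y) (gx x y) x)
    (hgxcont : Continuous fun p : EuclideanSpace ℝ (Fin n) × EuclideanSpace ℝ (Fin m) => gx p.1 p.2)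
    (xbar d : EuclideanSpace ℝ (Fin n)) :
    ∃ L : ℝ, 0 ≤ L ∧ ∀ᶠ p : EuclideanSpace ℝ (Fin n) × ℝ in (𝓝 xbar ×ˢ 𝓝[>] (0:ℝ)),
      |(marginalMax φ Y (p.1 + p.2 • d) - marginalMax φ Y p.1) / p.2| ≤ L * ‖d‖ := by
  obtain ⟨L, hL0, hL⟩ := aux_gx_bound hYcomp hgxcont (isCompact_closedBall xbar 1)
  refine ⟨L, hL0, ?_⟩
  filter_upwards [aux_eventually_ball (xbar := xbar)
    (by norm_num : (0:ℝ) < 1/2) (by positivity : (0:ℝ) < (1/2)/(‖d‖+1))] with p hp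
  obtain ⟨hx', ht0, htτ⟩ := hp
  set x' := p.1; set t := p.2
  have hx'' : ‖(x' + t • d) - xbar‖ < 1 := by
    have : ‖(x' + t • d) - xbar‖ ≤ ‖x' - xbar‖ + t * ‖d‖ := by
      calc ‖(x' + t • d) - xbar‖ = ‖(x' - xbar) + t • d‖ := by rw [add_sub_right_comm]
        _ ≤ ‖x' - xbar‖ + ‖t • d‖ := norm_add_le _ _
        _ = ‖x' - xbar‖ + t * ‖d‖ := by rw [norm_smul, Real.norm_eq_abs, abs_of_pos ht0]
    have h2 : t * ‖d‖ < (1/2)/(‖d‖+1) * (‖d‖+1) := by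
      apply lt_of_le_of_lt (b := t * (‖d‖+1))
      · nlinarith [norm_nonneg d, ht0.le]
      · exact mul_lt_mul_of_pos_right htτ (by positivity)
    rw [div_mul_cancel₀] at h2
    · linarith
    · positivity
  have hx'1 : ‖x' - xbar‖ < 1 := by linarith
  have hlip1 : marginalMax φ Y (x' + t • d) - marginalMax φ Y x' ≤ L * ‖(x' + t • d) - x'‖ :=
    aux_lip hYne hYcomp hφcont hgrad (fun x hx y hy => hL x (by
      simpa [Metric.mem_closedBall, dist_eq_norm] using hx) y hy) hx'1 hx''
  have hlip2 : marginalMax φ Y x' - marginalMax φ Y (x' + t • d) ≤ L * ‖(x' + t • d) - x'‖ := by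
    have := aux_lip hYne hYcomp hφcont hgrad (fun x hx y hy => hL x (by
      simpa [Metric.mem_closedBall, dist_eq_norm] using hx) y hy) hx'' hx'1
    calc marginalMax φ Y x' - marginalMax φ Y (x' + t • d) ≤ L * ‖x' - (x' + t • d)‖ := this
      _ = L * ‖(x' + t • d) - x'‖ := by rw [norm_sub_rev]
  have hnorm : ‖(x' + t • d) - x'‖ = t * ‖d‖ := by
    simp [norm_smul, Real.norm_eq_abs, abs_of_pos ht0]
  rw [abs_div, abs_of_pos ht0, div_le_iff₀ ht0, abs_le]
  constructor
  · nlinarith [hlip2, hnorm]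
  · nlinarith [hlip1, hnorm]

/-- Danskin-type upper bound on the Clarke directional derivative. -/
lemma aux_clarkeDeriv_le (hYne : Y.Nonempty) (hYcomp : IsCompact Y)
    (hφcont : Continuous fun p : EuclideanSpace ℝ (Fin n) × EuclideanSpace ℝ (Fin m) => φ p.1 p.2)
    (hgrad : ∀ x, ∀ y ∈ Y, HasGradientAt (fun x' => φ x' y) (gx x y) x)
    (hgxcont : Continuous fun p : EuclideanSpace ℝ (Fin n) × EuclideanSpace ℝ (Fin m) => gx p.1 p.2)
    (xbar d : EuclideanSpace ℝ (Fin n)) :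
    clarkeDeriv (marginalMax φ Y) xbar d ≤
      sSup ((fun y => ⟪gx xbar y, d⟫) '' maxSol φ Y xbar) := by
  set Msup := sSup ((fun y => ⟪gx xbar y, d⟫) '' maxSol φ Y xbar) with hMdef
  obtain ⟨L, hL0, hLev⟩ := aux_quot_bound hYne hYcomp hφcont hgrad hgxcont xbar d
  have hcobdd : Filter.IsCoboundedUnder (· ≤ ·) (𝓝 xbar ×ˢ 𝓝[>] (0:ℝ))
      (fun p : EuclideanSpace ℝ (Fin n) × ℝ =>
        (marginalMax φ Y (p.1 + p.2 • d) - marginalMax φ Y p.1) / p.2) := by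
    apply Filter.IsBoundedUnder.isCoboundedUnder_le
    refine ⟨-(L * ‖d‖), Filter.eventually_map.mpr ?_⟩
    filter_upwards [hLev] with p hp
    have := abs_le.mp hp
    linarith [this.1]
  apply le_of_forall_pos_le_add
  intro δ hδ
  obtain ⟨r, hr0, husc⟩ := aux_usc hYne hYcomp hφcont hgxcont xbar d hδ
  set R := min r 1 with hR
  have hR0 : 0 < R := lt_min hr0 one_pos
  apply Filter.limsup_le_of_le hcobdd
  filter_upwards [aux_eventually_ball (xbar := xbar)
    (by positivity : (0:ℝ) < R/2) (by positivity : (0:ℝ) < (R/2)/(‖d‖+1))] with p hp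
  obtain ⟨hx', ht0, htτ⟩ := hp
  set x' := p.1; set t := p.2
  set x'' := x' + t • d with hx''def
  have hx'' : ‖x'' - xbar‖ < R := by
    have h1 : ‖x'' - xbar‖ ≤ ‖x' - xbar‖ + t * ‖d‖ := by
      calc ‖x'' - xbar‖ = ‖(x' - xbar) + t • d‖ := by rw [hx''def, add_sub_right_comm]
        _ ≤ ‖x' - xbar‖ + ‖t • d‖ := norm_add_le _ _
        _ = ‖x' - xbar‖ + t * ‖d‖ := by rw [norm_smul, Real.norm_eq_abs, abs_of_pos ht0]
    have h2 : t * ‖d‖ < (R/2)/(‖d‖+1) * (‖d‖+1) := by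
      apply lt_of_le_of_lt (b := t * (‖d‖+1))
      · nlinarith [norm_nonneg d, ht0.le]
      · exact mul_lt_mul_of_pos_right htτ (by positivity)
    rw [div_mul_cancel₀ _ (by positivity : (‖d‖:ℝ)+1 ≠ 0)] at h2
    linarith
  have hx'R : ‖x' - xbar‖ < R := by linarith
  obtain ⟨y'', hy''⟩ := aux_maxSol_nonempty hYne hYcomp hφcont x''
  have hf'' : marginalMax φ Y x'' = φ x'' y'' := aux_marginal_eq hYcomp hφcont hy''
  have hf' : φ x' y'' ≤ marginalMax φ Y x' := aux_le_marginal hYcomp hφcont hy''.1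
  obtain ⟨θ, hθ, hmvt⟩ := aux_mvt hgrad hy''.1 x' x''
  set ξ := x' + θ • (x'' - x') with hξdef
  have hξ : ‖ξ - xbar‖ < R := aux_seg_mem hθ hx'R hx''
  have hball : ⟪gx ξ y'', d⟫ ≤ Msup + δ :=
    husc ξ x'' (lt_of_lt_of_le hξ (min_le_left _ _)) (lt_of_lt_of_le hx'' (min_le_left _ _))
      y'' hy''
  have hsub : x'' - x' = t • d := by rw [hx''def]; abel
  have hinner : φ x'' y'' - φ x' y'' = t * ⟪gx ξ y'', d⟫ := by
    rw [hmvt, hsub, real_inner_smul_right]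
  have hnum : marginalMax φ Y x'' - marginalMax φ Y x' ≤ t * (Msup + δ) := by
    have : marginalMax φ Y x'' - marginalMax φ Y x' ≤ φ x'' y'' - φ x' y'' := by
      linarith [hf''.le, hf']
    calc marginalMax φ Y x'' - marginalMax φ Y x' ≤ t * ⟪gx ξ y'', d⟫ := by linarith [hinner]
      _ ≤ t * (Msup + δ) := mul_le_mul_of_nonneg_left hball ht0.le
  rw [div_le_iff₀ ht0]
  linarith [hnum]

/-- gradients at maximizers are Clarke subgradients -/
lemma aux_S_subset_clarke (hYne : Y.Nonempty) (hYcomp : IsCompact Y)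
    (hφcont : Continuous fun p : EuclideanSpace ℝ (Fin n) × EuclideanSpace ℝ (Fin m) => φ p.1 p.2)
    (hgrad : ∀ x, ∀ y ∈ Y, HasGradientAt (fun x' => φ x' y) (gx x y) x)
    (hgxcont : Continuous fun p : EuclideanSpace ℝ (Fin n) × EuclideanSpace ℝ (Fin m) => gx p.1 p.2)
    {xbar : EuclideanSpace ℝ (Fin n)} {ystar : EuclideanSpace ℝ (Fin m)}
    (hystar : ystar ∈ maxSol φ Y xbar) :
    gx xbar ystar ∈ clarkeSubdiff (marginalMax φ Y) xbar := by
  intro d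
  set c := ⟪gx xbar ystar, d⟫ with hc
  obtain ⟨L, hL0, hLev⟩ := aux_quot_bound hYne hYcomp hφcont hgrad hgxcont xbar d
  have hbdd : Filter.IsBoundedUnder (· ≤ ·) (𝓝 xbar ×ˢ 𝓝[>] (0:ℝ))
      (fun p : EuclideanSpace ℝ (Fin n) × ℝ =>
        (marginalMax φ Y (p.1 + p.2 • d) - marginalMax φ Y p.1) / p.2) := by
    refine ⟨L * ‖d‖, Filter.eventually_map.mpr ?_⟩
    filter_upwards [hLev] with p hp
    exact (abs_le.mp hp).2
  -- the slope of ψ(t) = φ(xbar + t d, ystar) tends to c from the right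
  have hψd : HasDerivAt (fun t : ℝ => φ (xbar + t • d) ystar) c 0 := by
    have hline : HasDerivAt (fun t : ℝ => xbar + t • d) d 0 := by
      simpa using ((hasDerivAt_id (0:ℝ)).smul_const d).const_add xbar
    have h0 : xbar + (0:ℝ) • d = xbar := by simp
    have h1 := (hgrad xbar ystar hystar.1).hasFDerivAt
    rw [← h0] at h1
    have := h1.comp_hasDerivAt 0 hline
    simp only [InnerProductSpace.toDual_apply_apply, zero_smul, add_zero] at this
    exact this
  have hslope : Tendsto (fun t : ℝ => (φ (xbar + t • d) ystar - φ (xbar + (0:ℝ) • d) ystar) / t)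
      (𝓝[>] (0:ℝ)) (𝓝 c) := by
    have := hasDerivAt_iff_tendsto_slope.mp hψd
    have h2 := this.mono_left (nhdsWithin_mono 0 (fun t (ht : t ∈ Set.Ioi (0:ℝ)) =>
      (ne_of_gt ht : t ≠ 0)))
    refine h2.congr (fun t => ?_)
    simp [slope_def_field]
  apply le_of_forall_pos_le_add
  intro δ hδ
  have hfreq : ∃ᶠ p : EuclideanSpace ℝ (Fin n) × ℝ in (𝓝 xbar ×ˢ 𝓝[>] (0:ℝ)),
      c - δ ≤ (marginalMax φ Y (p.1 + p.2 • d) - marginalMax φ Y p.1) / p.2 := by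
    have hmap : Tendsto (fun t : ℝ => ((xbar, t) : EuclideanSpace ℝ (Fin n) × ℝ))
        (𝓝[>] (0:ℝ)) (𝓝 xbar ×ˢ 𝓝[>] (0:ℝ)) :=
      tendsto_const_nhds.prodMk tendsto_id
    apply hmap.frequently
    apply Filter.Eventually.frequently
    have hev : ∀ᶠ t in 𝓝[>] (0:ℝ),
        c - δ < (φ (xbar + t • d) ystar - φ (xbar + (0:ℝ) • d) ystar) / t :=
      hslope.eventually_const_lt (by linarith)
    filter_upwards [hev, self_mem_nhdsWithin] with t ht ht0
    have ht0 : (0:ℝ) < t := ht0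
    have hnum : φ (xbar + t • d) ystar - φ (xbar + (0:ℝ) • d) ystar ≤
        marginalMax φ Y (xbar + t • d) - marginalMax φ Y xbar := by
      have h1 : φ (xbar + t • d) ystar ≤ marginalMax φ Y (xbar + t • d) :=
        aux_le_marginal hYcomp hφcont hystar.1
      have h2 : marginalMax φ Y xbar = φ xbar ystar := aux_marginal_eq hYcomp hφcont hystar
      simp only [zero_smul, add_zero]
      linarith
    refine le_trans ht.le ?_
    gcongr
  have := Filter.le_limsup_of_frequently_le hfreq hbdd
  unfold clarkeDeriv
  linarith

/-- separation: support-function bounds force membership in a compact convex set -/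
lemma aux_mem_of_support {S : Set (EuclideanSpace ℝ (Fin n))} (hconv : Convex ℝ S)
    (hScomp : IsCompact S) (hSne : S.Nonempty) {v : EuclideanSpace ℝ (Fin n)}
    (hv : ∀ d : EuclideanSpace ℝ (Fin n), ⟪v, d⟫ ≤ sSup ((fun u => ⟪u, d⟫) '' S)) :
    v ∈ S := by
  by_contra hvS
  obtain ⟨ℓ, u, hlt, hgt⟩ := geometric_hahn_banach_closed_point hconv hScomp.isClosed hvS
  set w := (InnerProductSpace.toDual ℝ (EuclideanSpace ℝ (Fin n))).symm ℓ with hw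
  have hℓ : ∀ z, ℓ z = ⟪w, z⟫ := fun z => by
    rw [hw, InnerProductSpace.toDual_symm_apply]
  have hsup : sSup ((fun u' => ⟪u', w⟫) '' S) ≤ u := by
    apply csSup_le (hSne.image _)
    rintro a ⟨z, hz, rfl⟩
    have := hlt z hz
    rw [hℓ z] at this
    show ⟪z, w⟫ ≤ u
    rw [real_inner_comm]
    exact this.le
  have h1 : ⟪v, w⟫ ≤ u := le_trans (hv w) hsup
  have h2 : u < ⟪v, w⟫ := by
    have := hgt
    rw [hℓ v, real_inner_comm] at this
    exact this
  linarith

/-- When `S(x̄)` is convex, the Clarke subdifferential equals `S(x̄)`. -/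
lemma aux_clarke_eq (hYne : Y.Nonempty) (hYcomp : IsCompact Y)
    (hφcont : Continuous fun p : EuclideanSpace ℝ (Fin n) × EuclideanSpace ℝ (Fin m) => φ p.1 p.2)
    (hgrad : ∀ x, ∀ y ∈ Y, HasGradientAt (fun x' => φ x' y) (gx x y) x)
    (hgxcont : Continuous fun p : EuclideanSpace ℝ (Fin n) × EuclideanSpace ℝ (Fin m) => gx p.1 p.2)
    (xbar : EuclideanSpace ℝ (Fin n))
    (hconv : Convex ℝ ((fun y => gx xbar y) '' maxSol φ Y xbar)) :
    clarkeSubdiff (marginalMax φ Y) xbar = (fun y => gx xbar y) '' maxSol φ Y xbar := by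
  apply Set.Subset.antisymm
  · intro v hv
    apply aux_mem_of_support hconv
      ((aux_maxSol_isCompact hYcomp hφcont xbar).image
        (hgxcont.comp (Continuous.prodMk_right xbar)))
      ((aux_maxSol_nonempty hYne hYcomp hφcont xbar).image _)
    intro d
    have h1 : ⟪v, d⟫ ≤ clarkeDeriv (marginalMax φ Y) xbar d := hv d
    have h2 := aux_clarkeDeriv_le hYne hYcomp hφcont hgrad hgxcont xbar d
    refine le_trans (le_trans h1 h2) (le_of_eq ?_)
    congr 1
    ext a
    constructor
    · rintro ⟨y, hy, rfl⟩; exact ⟨gx xbar y, ⟨y, hy, rfl⟩, rfl⟩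
    · rintro ⟨u', ⟨y, hy, rfl⟩, rfl⟩; exact ⟨y, hy, rfl⟩
  · rintro v ⟨y, hy, rfl⟩
    exact aux_S_subset_clarke hYne hYcomp hφcont hgrad hgxcont hy

/-- existence of a minimal norm element of a compact nonempty set -/
lemma aux_minnorm_exists {S : Set (EuclideanSpace ℝ (Fin n))} (hScomp : IsCompact S)
    (hSne : S.Nonempty) : ∃ g, IsMinNormElt S g := by
  obtain ⟨g, hg, hmin⟩ := hScomp.exists_isMinOn hSne continuous_norm.continuousOn
  exact ⟨g, hg, fun v hv => hmin hv⟩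

/-- uniqueness of the minimal norm element in a convex set -/
lemma aux_minnorm_eq {S : Set (EuclideanSpace ℝ (Fin n))} (hconv : Convex ℝ S)
    {g u : EuclideanSpace ℝ (Fin n)} (hg : IsMinNormElt S g) (hu : u ∈ S)
    (hun : ‖u‖ ≤ ‖g‖) : u = g := by
  have h1 : ‖g‖ ≤ ‖u‖ := hg.2 u hu
  have hmid : (1/2 : ℝ) • u + (1/2 : ℝ) • g ∈ S :=
    hconv hu hg.1 (by norm_num) (by norm_num) (by norm_num)
  have h2 : ‖g‖ ≤ ‖(1/2 : ℝ) • u + (1/2 : ℝ) • g‖ := hg.2 _ hmid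
  have h3 : (1/2 : ℝ) • u + (1/2 : ℝ) • g = (1/2 : ℝ) • (u + g) := by module
  have h4 : ‖g‖ ≤ (1/2) * ‖u + g‖ := by
    rw [h3, norm_smul] at h2
    simpa using h2
  have hpar : ‖u + g‖ ^ 2 + ‖u - g‖ ^ 2 = 2 * (‖u‖ ^ 2 + ‖g‖ ^ 2) := by
    have := parallelogram_law_with_norm ℝ u g
    nlinarith [this]
  have h5 : ‖u - g‖ ^ 2 ≤ 0 := by nlinarith [norm_nonneg (u + g), norm_nonneg g, h1, hun]
  have h6 : ‖u - g‖ = 0 := by nlinarith [norm_nonneg (u - g)]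
  have := norm_eq_zero.mp h6
  exact sub_eq_zero.mp this

/-- key inequality for regularized solutions -/
lemma aux_key (hYcomp : IsCompact Y)
    (hφcont : Continuous fun p : EuclideanSpace ℝ (Fin n) × EuclideanSpace ℝ (Fin m) => φ p.1 p.2)
    {ε : ℝ} (hε : 0 < ε) {x : EuclideanSpace ℝ (Fin n)} {yε ystar : EuclideanSpace ℝ (Fin m)}
    (hyε : yε ∈ regMaxSol φ gx Y ε x) (hystar : ystar ∈ maxSol φ Y x) :
    ‖gx x yε‖ ≤ ‖gx x ystar‖ ∧
      marginalMax φ Y x - φ x yε ≤ ε / 2 * ‖gx x ystar‖ ^ 2 := by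
  have h1 : φ x ystar - ε / 2 * ‖gx x ystar‖ ^ 2 ≤ φ x yε - ε / 2 * ‖gx x yε‖ ^ 2 :=
    hyε.2 ystar hystar.1
  have h2 : φ x yε ≤ φ x ystar := hystar.2 yε hyε.1
  have h3 : ‖gx x yε‖ ^ 2 ≤ ‖gx x ystar‖ ^ 2 := by nlinarith
  constructor
  · exact (pow_le_pow_iff_left₀ (norm_nonneg _) (norm_nonneg _) (by norm_num)).mp h3
  · have h4 : marginalMax φ Y x = φ x ystar := aux_marginal_eq hYcomp hφcont hystar
    nlinarith [sq_nonneg ‖gx x yε‖]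

lemma aux_regMaxSol_subset {ε : ℝ} {x : EuclideanSpace ℝ (Fin n)} :
    regMaxSol φ gx Y ε x ⊆ Y := fun _ hy => hy.1

lemma aux_regMaxSol_isCompact (hYcomp : IsCompact Y)
    (hφcont : Continuous fun p : EuclideanSpace ℝ (Fin n) × EuclideanSpace ℝ (Fin m) => φ p.1 p.2)
    (hgxcont : Continuous fun p : EuclideanSpace ℝ (Fin n) × EuclideanSpace ℝ (Fin m) => gx p.1 p.2)
    (ε : ℝ) (x : EuclideanSpace ℝ (Fin n)) : IsCompact (regMaxSol φ gx Y ε x) := by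
  have hc : Continuous fun y : EuclideanSpace ℝ (Fin m) => φ x y - ε / 2 * ‖gx x y‖ ^ 2 :=
    (aux_contY hφcont x).sub (continuous_const.mul
      (((hgxcont.comp (Continuous.prodMk_right x)).norm).pow 2))
  have h : regMaxSol φ gx Y ε x = Y ∩ ⋂ y' ∈ Y,
      {y | φ x y' - ε / 2 * ‖gx x y'‖ ^ 2 ≤ φ x y - ε / 2 * ‖gx x y‖ ^ 2} := by
    ext y; simp [regMaxSol, Set.mem_iInter]
  rw [h]
  exact hYcomp.inter_right (isClosed_biInter fun y' _ => isClosed_le continuous_const hc)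

/-- part (c), sequence form -/
lemma aux_c (hYcomp : IsCompact Y)
    (hφcont : Continuous fun p : EuclideanSpace ℝ (Fin n) × EuclideanSpace ℝ (Fin m) => φ p.1 p.2)
    (hgxcont : Continuous fun p : EuclideanSpace ℝ (Fin n) × EuclideanSpace ℝ (Fin m) => gx p.1 p.2)
    {ε : ℝ} {xbar : EuclideanSpace ℝ (Fin n)} {xs : ℕ → EuclideanSpace ℝ (Fin n)}
    {ys : ℕ → EuclideanSpace ℝ (Fin m)} {v : EuclideanSpace ℝ (Fin n)}
    (hxs : Tendsto xs atTop (𝓝 xbar)) (hys : ∀ k, ys k ∈ regMaxSol φ gx Y ε (xs k))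
    (hv : Tendsto (fun k => gx (xs k) (ys k)) atTop (𝓝 v)) :
    v ∈ (fun y => gx xbar y) '' regMaxSol φ gx Y ε xbar := by
  obtain ⟨yhat, hyhatY, σ, hσ, hyconv⟩ := hYcomp.isSeqCompact (fun k => (hys k).1)
  have hxsσ : Tendsto (xs ∘ σ) atTop (𝓝 xbar) := hxs.comp hσ.tendsto_atTop
  have hyhat : yhat ∈ regMaxSol φ gx Y ε xbar := by
    refine ⟨hyhatY, fun y' hy' => ?_⟩
    have hL : Tendsto (fun j => φ (xs (σ j)) y' - ε / 2 * ‖gx (xs (σ j)) y'‖ ^ 2) atTop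
        (𝓝 (φ xbar y' - ε / 2 * ‖gx xbar y'‖ ^ 2)) :=
      (aux_tendsto_phi hφcont hxsσ tendsto_const_nhds).sub
        (tendsto_const_nhds.mul (((aux_tendsto_gx hgxcont hxsσ tendsto_const_nhds).norm).pow 2))
    have hR : Tendsto (fun j => φ (xs (σ j)) (ys (σ j)) - ε / 2 * ‖gx (xs (σ j)) (ys (σ j))‖ ^ 2)
        atTop (𝓝 (φ xbar yhat - ε / 2 * ‖gx xbar yhat‖ ^ 2)) :=
      (aux_tendsto_phi hφcont hxsσ hyconv).sub
        (tendsto_const_nhds.mul (((aux_tendsto_gx hgxcont hxsσ hyconv).norm).pow 2))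
    exact le_of_tendsto_of_tendsto' hL hR (fun j => (hys (σ j)).2 y' hy')
  refine ⟨yhat, hyhat, ?_⟩
  exact tendsto_nhds_unique (aux_tendsto_gx hgxcont hxsσ hyconv) (hv.comp hσ.tendsto_atTop)

/-- joint outer limit lands in `S(x̄)` -/
lemma aux_joint (hYcomp : IsCompact Y)
    (hφcont : Continuous fun p : EuclideanSpace ℝ (Fin n) × EuclideanSpace ℝ (Fin m) => φ p.1 p.2)
    (hgxcont : Continuous fun p : EuclideanSpace ℝ (Fin n) × EuclideanSpace ℝ (Fin m) => gx p.1 p.2)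
    {xbar : EuclideanSpace ℝ (Fin n)} {eps : ℕ → ℝ} {xs : ℕ → EuclideanSpace ℝ (Fin n)}
    {ys : ℕ → EuclideanSpace ℝ (Fin m)} {u : EuclideanSpace ℝ (Fin n)}
    (heps : Tendsto eps atTop (𝓝 0)) (hxs : Tendsto xs atTop (𝓝 xbar))
    (hys : ∀ k, ys k ∈ regMaxSol φ gx Y (eps k) (xs k))
    (hu : Tendsto (fun k => gx (xs k) (ys k)) atTop (𝓝 u)) :
    u ∈ (fun y => gx xbar y) '' maxSol φ Y xbar := by
  obtain ⟨yhat, hyhatY, σ, hσ, hyconv⟩ := hYcomp.isSeqCompact (fun k => (hys k).1)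
  have hxsσ : Tendsto (xs ∘ σ) atTop (𝓝 xbar) := hxs.comp hσ.tendsto_atTop
  have hepsσ : Tendsto (eps ∘ σ) atTop (𝓝 0) := heps.comp hσ.tendsto_atTop
  have hyhat : yhat ∈ maxSol φ Y xbar := by
    refine ⟨hyhatY, fun y' hy' => ?_⟩
    have hL : Tendsto (fun j => φ (xs (σ j)) y' - eps (σ j) / 2 * ‖gx (xs (σ j)) y'‖ ^ 2) atTop
        (𝓝 (φ xbar y' - 0 / 2 * ‖gx xbar y'‖ ^ 2)) :=
      (aux_tendsto_phi hφcont hxsσ tendsto_const_nhds).sub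
        ((hepsσ.div_const 2).mul (((aux_tendsto_gx hgxcont hxsσ tendsto_const_nhds).norm).pow 2))
    have hR : Tendsto (fun j => φ (xs (σ j)) (ys (σ j)) -
        eps (σ j) / 2 * ‖gx (xs (σ j)) (ys (σ j))‖ ^ 2) atTop
        (𝓝 (φ xbar yhat - 0 / 2 * ‖gx xbar yhat‖ ^ 2)) :=
      (aux_tendsto_phi hφcont hxsσ hyconv).sub
        ((hepsσ.div_const 2).mul (((aux_tendsto_gx hgxcont hxsσ hyconv).norm).pow 2))
    have := le_of_tendsto_of_tendsto' hL hR (fun j => (hys (σ j)).2 y' hy')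
    simpa using this
  exact ⟨yhat, hyhat, tendsto_nhds_unique (aux_tendsto_gx hgxcont hxsσ hyconv)
    (hu.comp hσ.tendsto_atTop)⟩

/-- main convergence lemma: regularized gradients at `x̄` converge to the
minimal-norm element of `S(x̄)` when the latter is convex -/
lemma aux_I (hYne : Y.Nonempty) (hYcomp : IsCompact Y)
    (hφcont : Continuous fun p : EuclideanSpace ℝ (Fin n) × EuclideanSpace ℝ (Fin m) => φ p.1 p.2)
    (hgxcont : Continuous fun p : EuclideanSpace ℝ (Fin n) × EuclideanSpace ℝ (Fin m) => gx p.1 p.2)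
    {xbar : EuclideanSpace ℝ (Fin n)}
    (hconv : Convex ℝ ((fun y => gx xbar y) '' maxSol φ Y xbar))
    {g : EuclideanSpace ℝ (Fin n)}
    (hg : IsMinNormElt ((fun y => gx xbar y) '' maxSol φ Y xbar) g)
    (eps : ℕ → ℝ) (ys : ℕ → EuclideanSpace ℝ (Fin m))
    (hepsp : ∀ᶠ k in atTop, 0 < eps k) (heps : Tendsto eps atTop (𝓝 0))
    (hys : ∀ᶠ k in atTop, ys k ∈ regMaxSol φ gx Y (eps k) xbar) :
    Tendsto (fun k => gx xbar (ys k)) atTop (𝓝 g) := by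
  obtain ⟨ystar, hystar, hgstar⟩ := hg.1
  obtain ⟨K1, hK1⟩ := (hepsp.and hys).exists_forall_of_atTop
  apply tendsto_of_subseq_tendsto
  intro ns hns
  obtain ⟨J, hJ⟩ := (hns.eventually (eventually_ge_atTop K1)).exists_forall_of_atTop
  set ks : ℕ → ℕ := fun j => ns (j + J) with hks
  have hksK : ∀ j, K1 ≤ ks j := fun j => hJ (j + J) (le_add_self)
  have hksat : Tendsto ks atTop atTop := hns.comp (tendsto_add_atTop_nat J)
  have hmem : ∀ j, ys (ks j) ∈ regMaxSol φ gx Y (eps (ks j)) xbar :=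
    fun j => (hK1 (ks j) (hksK j)).2
  have hpos : ∀ j, 0 < eps (ks j) := fun j => (hK1 (ks j) (hksK j)).1
  obtain ⟨yhat, hyhatY, σ, hσ, hyconv⟩ := hYcomp.isSeqCompact (fun j => (hmem j).1)
  have hepsσ : Tendsto (fun i => eps (ks (σ i))) atTop (𝓝 0) :=
    heps.comp (hksat.comp hσ.tendsto_atTop)
  -- yhat is a maximizer
  have hmarg : marginalMax φ Y xbar ≤ φ xbar yhat := by
    have hkey : ∀ i, marginalMax φ Y xbar - φ xbar (ys (ks (σ i))) ≤
        eps (ks (σ i)) / 2 * ‖gx xbar ystar‖ ^ 2 :=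
      fun i => (aux_key hYcomp hφcont (hpos (σ i)) (hmem (σ i)) hystar).2
    have hlhs : Tendsto (fun i => marginalMax φ Y xbar - φ xbar (ys (ks (σ i)))) atTop
        (𝓝 (marginalMax φ Y xbar - φ xbar yhat)) :=
      tendsto_const_nhds.sub (aux_tendsto_phi hφcont tendsto_const_nhds hyconv)
    have hrhs : Tendsto (fun i => eps (ks (σ i)) / 2 * ‖gx xbar ystar‖ ^ 2) atTop (𝓝 0) := by
      have : Tendsto (fun i => eps (ks (σ i)) / 2 * ‖gx xbar ystar‖ ^ 2) atTop
          (𝓝 (0 / 2 * ‖gx xbar ystar‖ ^ 2)) :=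
        (hepsσ.div_const 2).mul tendsto_const_nhds
      simpa using this
    have := le_of_tendsto_of_tendsto' hlhs hrhs hkey
    linarith
  have hyhatmax : yhat ∈ maxSol φ Y xbar :=
    ⟨hyhatY, fun y' hy' => le_trans (aux_le_marginal hYcomp hφcont hy') hmarg⟩
  -- the gradient at yhat has minimal norm
  have hnle : ‖gx xbar yhat‖ ≤ ‖g‖ := by
    have hkey : ∀ i, ‖gx xbar (ys (ks (σ i)))‖ ≤ ‖gx xbar ystar‖ :=
      fun i => (aux_key hYcomp hφcont (hpos (σ i)) (hmem (σ i)) hystar).1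
    have hlim : Tendsto (fun i => ‖gx xbar (ys (ks (σ i)))‖) atTop (𝓝 ‖gx xbar yhat‖) :=
      (aux_tendsto_gx hgxcont tendsto_const_nhds hyconv).norm
    have := le_of_tendsto_of_tendsto' hlim
      (tendsto_const_nhds : Tendsto (fun _ : ℕ => ‖gx xbar ystar‖) atTop _) hkey
    calc ‖gx xbar yhat‖ ≤ ‖gx xbar ystar‖ := this
      _ = ‖g‖ := by rw [show gx xbar ystar = g from hgstar]
  have heq : gx xbar yhat = g :=
    aux_minnorm_eq hconv hg ⟨yhat, hyhatmax, rfl⟩ hnle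
  refine ⟨fun i => σ i + J, ?_⟩
  have : Tendsto (fun i => gx xbar (ys (ks (σ i)))) atTop (𝓝 (gx xbar yhat)) :=
    aux_tendsto_gx hgxcont tendsto_const_nhds hyconv
  rw [heq] at this
  exact this

end AuxLemmas

/-- with `G(x,ε) = {∇ₓφ(x,y) : y ∈ Y^ε(x)}` and
`S(x) = {∇ₓφ(x,y) : y ∈ Y*(x)}`:
(c) for every fixed `ε > 0`, every `x̄` and every selection `y^ε`, any limit of
`∇ₓφ(x, y^ε(x))` as `x → x̄` lies in `{∇ₓφ(x̄, y) : y ∈ Y^ε(x̄)}`; consequently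
`limsup_{x → x̄} G(x, ε) = G(x̄, ε)`;
(d) if `S(x̄)` is convex then `∇ₓφ(x̄, y^ε(x̄))` converges, as `ε ↓ 0`, to the
minimal-norm element of `∂f(x̄)`, and if `S(x)` is convex for every `x` then `G`
is a descent-oriented subdifferential for `f`. -/
theorem regularized_map_is_descentOriented {n m : ℕ}
    (Y : Set (EuclideanSpace ℝ (Fin m))) (hYne : Y.Nonempty)
    (hYconv : Convex ℝ Y) (hYcomp : IsCompact Y)
    (φ : EuclideanSpace ℝ (Fin n) → EuclideanSpace ℝ (Fin m) → ℝ)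
    (gx : EuclideanSpace ℝ (Fin n) → EuclideanSpace ℝ (Fin m) → EuclideanSpace ℝ (Fin n))
    (hgrad : ∀ x, ∀ y ∈ Y, HasGradientAt (fun x' => φ x' y) (gx x y) x)
    (hφcont : Continuous fun p : EuclideanSpace ℝ (Fin n) × EuclideanSpace ℝ (Fin m) => φ p.1 p.2)
    (hgxcont : Continuous fun p : EuclideanSpace ℝ (Fin n) × EuclideanSpace ℝ (Fin m) => gx p.1 p.2)
    (hconc : ∀ x, ConcaveOn ℝ Y (fun y => φ x y))
    (ysel : ℝ → EuclideanSpace ℝ (Fin n) → EuclideanSpace ℝ (Fin m))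
    (hysel : ∀ ε > (0 : ℝ), ∀ x, ysel ε x ∈ regMaxSol φ gx Y ε x) :
    (∀ ε > (0 : ℝ), ∀ xbar : EuclideanSpace ℝ (Fin n),
      (∀ (xs : ℕ → EuclideanSpace ℝ (Fin n)) (v : EuclideanSpace ℝ (Fin n)),
        Tendsto xs atTop (𝓝 xbar) →
        Tendsto (fun k => gx (xs k) (ysel ε (xs k))) atTop (𝓝 v) →
        v ∈ (fun y => gx xbar y) '' regMaxSol φ gx Y ε xbar) ∧
      SetMapLimsup (fun x => (fun y => gx x y) '' regMaxSol φ gx Y ε x) xbar =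
        (fun y => gx xbar y) '' regMaxSol φ gx Y ε xbar) ∧
    (∀ xbar : EuclideanSpace ℝ (Fin n),
      Convex ℝ ((fun y => gx xbar y) '' maxSol φ Y xbar) →
      ∃ g : EuclideanSpace ℝ (Fin n),
        IsMinNormElt (clarkeSubdiff (marginalMax φ Y) xbar) g ∧
        Tendsto (fun ε => gx xbar (ysel ε xbar)) (𝓝[>] (0 : ℝ)) (𝓝 g)) ∧
    ((∀ x : EuclideanSpace ℝ (Fin n), Convex ℝ ((fun y => gx x y) '' maxSol φ Y x)) →
      IsDescentOrientedSubdiff (marginalMax φ Y)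
        (fun x ε => (fun y => gx x y) '' regMaxSol φ gx Y ε x)) := by
  have hS_comp : ∀ x : EuclideanSpace ℝ (Fin n),
      IsCompact ((fun y => gx x y) '' maxSol φ Y x) := fun x =>
    (aux_maxSol_isCompact hYcomp hφcont x).image (hgxcont.comp (Continuous.prodMk_right x))
  have hS_ne : ∀ x : EuclideanSpace ℝ (Fin n),
      ((fun y => gx x y) '' maxSol φ Y x).Nonempty := fun x =>
    (aux_maxSol_nonempty hYne hYcomp hφcont x).image _
  -- the reusable part (d1) statement
  have hd1 : ∀ xbar : EuclideanSpace ℝ (Fin n),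
      Convex ℝ ((fun y => gx xbar y) '' maxSol φ Y xbar) →
      ∃ g : EuclideanSpace ℝ (Fin n),
        IsMinNormElt ((fun y => gx xbar y) '' maxSol φ Y xbar) g ∧
        IsMinNormElt (clarkeSubdiff (marginalMax φ Y) xbar) g ∧
        Tendsto (fun ε => gx xbar (ysel ε xbar)) (𝓝[>] (0 : ℝ)) (𝓝 g) := by
    intro xbar hconv
    obtain ⟨g, hg⟩ := aux_minnorm_exists (hS_comp xbar) (hS_ne xbar)
    refine ⟨g, hg, ?_, ?_⟩
    · rw [aux_clarke_eq hYne hYcomp hφcont hgrad hgxcont xbar hconv]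
      exact hg
    · apply tendsto_of_seq_tendsto
      intro epsseq hepsseq
      have h0 : Tendsto epsseq atTop (𝓝 0) := hepsseq.mono_right nhdsWithin_le_nhds
      have hpos : ∀ᶠ k in atTop, 0 < epsseq k :=
        hepsseq.eventually eventually_mem_nhdsWithin
      have hmem : ∀ᶠ k in atTop, ysel (epsseq k) xbar ∈ regMaxSol φ gx Y (epsseq k) xbar := by
        filter_upwards [hpos] with k hk
        exact hysel (epsseq k) hk xbar
      exact aux_I hYne hYcomp hφcont hgxcont hconv hg epsseq
        (fun k => ysel (epsseq k) xbar) hpos h0 hmem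
  refine ⟨?_, ?_, ?_⟩
  · -- part (c)
    intro ε hε xbar
    constructor
    · intro xs v hxs hv
      exact aux_c hYcomp hφcont hgxcont hxs (fun k => hysel ε hε (xs k)) hv
    · apply Set.Subset.antisymm
      · rintro u ⟨xs, vs, hxs, hvs, hu⟩
        choose ys hys hyeq using hvs
        have hu' : Tendsto (fun k => gx (xs k) (ys k)) atTop (𝓝 u) := by
          have : (fun k => gx (xs k) (ys k)) = vs := funext hyeq
          rw [this]; exact hu
        exact aux_c hYcomp hφcont hgxcont hxs hys hu'
      · intro u hu
        exact ⟨fun _ => xbar, fun _ => u, tendsto_const_nhds, fun _ => hu, tendsto_const_nhds⟩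
  · -- part (d1)
    intro xbar hconv
    obtain ⟨g, _, hg2, hg3⟩ := hd1 xbar hconv
    exact ⟨g, hg2, hg3⟩
  · -- part (d2)
    intro hconvall
    refine ⟨?_, ?_, ?_, ?_⟩
    · intro ε hε x
      exact ((aux_regMaxSol_isCompact hYcomp hφcont hgxcont ε x).image
        (hgxcont.comp (Continuous.prodMk_right x))).isClosed
    · intro ε hε x
      obtain ⟨L, hL0, hL⟩ := aux_gx_bound hYcomp hgxcont (isCompact_closedBall x 1)
      refine ⟨1, one_pos, L, fun y hy v hv => ?_⟩
      obtain ⟨z, hz, rfl⟩ := hv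
      exact hL y (by simpa [Metric.mem_closedBall, dist_eq_norm] using hy.le) z hz.1
    · intro xbar u hu
      obtain ⟨eps, xs, vs, hpos, heps, hxs, hmem, hvs⟩ := hu
      choose ys hys hyeq using hmem
      have hvs' : Tendsto (fun k => gx (xs k) (ys k)) atTop (𝓝 u) := by
        have : (fun k => gx (xs k) (ys k)) = vs := funext hyeq
        rw [this]; exact hvs
      obtain ⟨y, hy, rfl⟩ := aux_joint hYcomp hφcont hgxcont heps hxs hys hvs'
      exact aux_S_subset_clarke hYne hYcomp hφcont hgrad hgxcont hy
    · intro xbar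
      obtain ⟨g, hg1, hg2, _⟩ := hd1 xbar (hconvall xbar)
      refine ⟨g, hg2, ?_, ?_⟩
      · -- outer limit ⊆ {g}
        rintro u ⟨eps, vs, hpos, heps, hmem, hvs⟩
        have hmem' : ∀ k, vs k ∈ (fun y => gx xbar y) '' regMaxSol φ gx Y (eps k) xbar := by
          intro k
          obtain ⟨xs, ws, hxs, hws, hw⟩ := hmem k
          choose zs hzs hzeq using hws
          have hw' : Tendsto (fun j => gx (xs j) (zs j)) atTop (𝓝 (vs k)) := by
            have : (fun j => gx (xs j) (zs j)) = ws := funext hzeq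
            rw [this]; exact hw
          exact aux_c hYcomp hφcont hgxcont hxs hzs hw'
        choose zs hzs hzeq using hmem'
        have hlim : Tendsto (fun k => gx xbar (zs k)) atTop (𝓝 g) :=
          aux_I hYne hYcomp hφcont hgxcont (hconvall xbar) hg1 eps zs
            (Filter.Eventually.of_forall hpos) heps (Filter.Eventually.of_forall hzs)
        have : Tendsto vs atTop (𝓝 g) := by
          have heqf : (fun k => gx xbar (zs k)) = vs := funext hzeq
          rw [heqf] at hlim; exact hlim
        exact Set.mem_singleton_iff.mpr (tendsto_nhds_unique hvs this)
      · -- {g} ⊆ inner limit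
        intro u hu
        rw [Set.mem_singleton_iff] at hu
        subst hu
        intro eps hpos heps
        refine ⟨fun k => gx xbar (ysel (eps k) xbar), ?_, ?_⟩
        · refine Filter.Eventually.of_forall (fun k => ?_)
          exact ⟨fun _ => xbar, fun _ => gx xbar (ysel (eps k) xbar), tendsto_const_nhds,
            fun _ => ⟨ysel (eps k) xbar, hysel (eps k) (hpos k) xbar, rfl⟩, tendsto_const_nhds⟩
        · exact aux_I hYne hYcomp hφcont hgxcont (hconvall xbar) hg1 eps
            (fun k => ysel (eps k) xbar) (Filter.Eventually.of_forall hpos) heps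
            (Filter.Eventually.of_forall (fun k => hysel (eps k) (hpos k) xbar))
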